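/- Let F_q be a finite field. The number of distinct j-invariants of generalized Hessian curves E_{GH,u,v}: X^3+Y^3+v = uXY over F_q (v ∈ F_q^*, u^3 ≠ 27v) equals: q-1 if q ≡ 0 (mod 3); ⌊(3q+1)/4⌋ if q ≡ 1 (mod 3); ⌊q/2⌋ if q ≡ 2 (mod 3). -/

import Mathlib

namespace GHJ

variable {F : Type*} [Field F]

/-- the j-invariant as a function of the Hessian-type parameter `n`. -/
def hh (n : F) : F := 27 * n * (n + 8)^3 / (n - 1)^3

/-- the symmetric cofactor of the correspondence curve. -/
def Cpoly (n m : F) : F :=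
  n^3*m^3 - 3*n^3*m^2 + 3*n^3*m - n^3 - 3*n^2*m^3 - 261*n^2*m^2 - 441*n^2*m - 24*n^2
    + 3*n*m^3 - 441*n*m^2 + 2088*n*m - 192*n - m^3 - 24*m^2 - 192*m - 512

lemma hh_zero : hh (0:F) = 0 := by simp [hh]

lemma hh_neg8 : hh (-8:F) = 0 := by norm_num [hh]

lemma h27 (h3 : (3:F) ≠ 0) : (27:F) ≠ 0 := by
  intro h
  have h' : (3:F)^3 = 0 := by rw [show (3:F)^3 = 27 by norm_num, h]
  exact h3 ((pow_eq_zero_iff (by norm_num)).mp h')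

lemma h9 (h3 : (3:F) ≠ 0) : (9:F) ≠ 0 := by
  intro h
  have h' : (3:F)^2 = 0 := by rw [show (3:F)^2 = 9 by norm_num, h]
  exact h3 ((pow_eq_zero_iff (by norm_num)).mp h')

lemma hh_eq_iff (h3 : (3:F) ≠ 0) {n m : F} (hn : n ≠ 1) (hm : m ≠ 1) :
    hh m = hh n ↔ m*(m+8)^3*(n-1)^3 = n*(n+8)^3*(m-1)^3 := by
  rw [hh, hh, div_eq_div_iff (pow_ne_zero 3 (sub_ne_zero.2 hm)) (pow_ne_zero 3 (sub_ne_zero.2 hn))]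
  constructor
  · intro H
    have H' : (27:F)*(m*(m+8)^3*(n-1)^3) = 27*(n*(n+8)^3*(m-1)^3) := by linear_combination H
    exact mul_left_cancel₀ (h27 h3) H'
  · intro H; linear_combination 27*H

lemma hh_ne_zero (h3 : (3:F) ≠ 0) {n : F} (h0 : n ≠ 0) (h8 : n ≠ -8) (h1 : n ≠ 1) :
    hh n ≠ 0 := by
  rw [hh]
  apply div_ne_zero _ (pow_ne_zero 3 (sub_ne_zero.2 h1))
  exact mul_ne_zero (mul_ne_zero (h27 h3) h0) (pow_ne_zero 3 (by intro h; exact h8 (by linear_combination h)))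

lemma hh_1728 (h3 : (3:F) ≠ 0) {n : F} (hq : n^2 = 20*n + 8) (hn : n ≠ 1) :
    hh n = 1728 := by
  rw [hh, div_eq_iff (pow_ne_zero 3 (sub_ne_zero.2 hn))]
  linear_combination (27*(n^2-20*n-8))*hq

lemma hh_eq_1728_iff (h3 : (3:F) ≠ 0) {n : F} (hn : n ≠ 1) :
    hh n = 1728 ↔ n^2 = 20*n + 8 := by
  refine ⟨fun H => ?_, fun H => hh_1728 h3 H hn⟩
  rw [hh, div_eq_iff (pow_ne_zero 3 (sub_ne_zero.2 hn))] at H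
  have h0 : (27:F)*(n^2-(20*n+8))^2 = 0 := by linear_combination H
  have := (mul_eq_zero.mp h0).resolve_left (h27 h3)
  have := (pow_eq_zero_iff (two_ne_zero)).mp this
  linear_combination this

lemma mu_quad {d μ : F} (hμ : μ^3 = 1) (hq : d^2 = 2*μ*d + 2*μ^2) : (d^3)^2 = 20*d^3 + 8 := by
  linear_combination (d^4 + 2*μ*d^3 + 6*μ^2*d^2 + 16*μ^3*d - 20*d + 44*μ^4 - 40*μ) * hq
    + (8 + 88*μ^3 + 120*μ^2*d) * hμ

lemma subA (h3 : (3:F) ≠ 0) {d : F} (H : (d+2)^3 = d^3*(d-1)^3) :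
    (d^3)^2 = 20*d^3+8 ∨ d^3 = 1 ∨ d^3 = -8 := by
  have h0 : (d^2-2*d-2)*((d^2+d+1)*(d^2-2*d+4)) = 0 := by linear_combination -H
  rcases mul_eq_zero.mp h0 with h | h
  · exact Or.inl (mu_quad (μ := 1) (one_pow 3) (by linear_combination h))
  rcases mul_eq_zero.mp h with h | h
  · exact Or.inr (Or.inl (by linear_combination (d-1)*h))
  · exact Or.inr (Or.inr (by linear_combination (d+2)*h))

lemma subB (h3 : (3:F) ≠ 0) {d ζ : F} (hζ : ζ^2 + ζ + 1 = 0) (hd : d ≠ 0)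
    (H : ((ζ*d+2)*(d-1))^3 = ((d+2)*(ζ*d-1))^3) :
    (d^3)^2 = 20*d^3+8 ∨ d^3 = 1 ∨ d^3 = -8 := by
  have hζ3 : ζ^3 = 1 := by linear_combination (ζ-1)*hζ
  have hζ1 : ζ ≠ 1 := by intro h; rw [h] at hζ; exact h3 (by linear_combination hζ)
  have hfac : (((ζ*d+2)*(d-1)) - ((d+2)*(ζ*d-1)))
      * ((((ζ*d+2)*(d-1)) - ζ*((d+2)*(ζ*d-1))) * (((ζ*d+2)*(d-1)) - ζ^2*((d+2)*(ζ*d-1)))) = 0 := by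
    linear_combination H + (((ζ*d+2)*(d-1))*((d+2)*(ζ*d-1))^2 - ((ζ*d+2)*(d-1))^2*((d+2)*(ζ*d-1)))*hζ
      + (((ζ*d+2)*(d-1))*((d+2)*(ζ*d-1))^2 - ((d+2)*(ζ*d-1))^3)*hζ3
  have hAB : ((ζ*d+2)*(d-1)) - ((d+2)*(ζ*d-1)) ≠ 0 := by
    have e : ((ζ*d+2)*(d-1)) - ((d+2)*(ζ*d-1)) = 3*d*(1-ζ) := by ring
    rw [e]
    exact mul_ne_zero (mul_ne_zero h3 hd) (sub_ne_zero.2 (Ne.symm hζ1))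
  rcases mul_eq_zero.mp hfac with h | h
  · exact absurd h hAB
  rcases mul_eq_zero.mp h with h | h
  · -- A = ζB case
    have h31 : (2*ζ+1) * (d^2 - 2*ζ*d - 2*ζ^2) = 0 := by
      linear_combination h + (d^2-2*d-4*ζ+2)*hζ
    have h2z : (2*ζ+1) ≠ 0 := by
      intro h0; exact h3 (by linear_combination (-(2*ζ+1))*h0 + 4*hζ)
    have hq := (mul_eq_zero.mp h31).resolve_left h2z
    exact Or.inl (mu_quad hζ3 (by linear_combination hq))
  · -- A = ζ²B case
    have h32 : (ζ-1)*((d-ζ)*(d+2*ζ)) = 0 := by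
      linear_combination h - (1-ζ)*(d^2+2*d-2)*hζ
    have := (mul_eq_zero.mp h32).resolve_left (sub_ne_zero.2 hζ1)
    rcases mul_eq_zero.mp this with h | h
    · exact Or.inr (Or.inl (by linear_combination (d^2+d*ζ+ζ^2)*h + hζ3))
    · exact Or.inr (Or.inr (by linear_combination (d^2-2*d*ζ+4*ζ^2)*h - 8*hζ3))


/-- Completeness: description of all solutions of `hh m = hh n`. -/
theorem complete (h3 : (3:F) ≠ 0) {n m : F} (hn : n ≠ 1) (hm : m ≠ 1) (hnm : m ≠ n)
    (H : hh m = hh n) :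
    (n^2 = 20*n + 8 ∧ m = 20 - n) ∨ ∃ d : F, d^3 = n ∧ (d+2)^3 = m*(d-1)^3 := by
  rw [hh_eq_iff h3 hn hm] at H
  have hC : Cpoly n m = 0 := by
    have h0 : (n - m) * Cpoly n m = 0 := by
      unfold Cpoly; linear_combination -H
    exact (mul_eq_zero.mp h0).resolve_left (sub_ne_zero.2 (Ne.symm hnm))
  unfold Cpoly at hC
  by_cases hD : 9*(4-m)^2 - 3*(m+2)*(n+8+m-n*m) = 0
  · -- degenerate locus
    have hfact : ((3:F)*(m-1)) * ((m+2)*n + 2*m - 32) = 0 := by linear_combination hD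
    have hsub : (m+2)*n = 32 - 2*m := by
      have h1 := (mul_eq_zero.mp hfact).resolve_left
        (mul_ne_zero h3 (sub_ne_zero.2 hm))
      linear_combination h1
    by_cases hm2 : m + 2 = 0
    · -- m = -2 forces char 2 then contradiction
      exfalso
      have h36 : (36:F) = 0 := by
        linear_combination -hsub + (n+2)*hm2
      have h2 : (2:F) = 0 := by
        by_contra h2
        have : (2:F)*(2*(3*3)) ≠ 0 := by
          exact mul_ne_zero h2 (mul_ne_zero h2 (mul_ne_zero h3 h3))
        exact this (by linear_combination h36)
      have hm0 : m = 0 := by linear_combination hm2 - h2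
      rw [hm0] at hC
      have h8 : (n+8)^3 = 0 := by linear_combination -hC
      have hn8 : n = -8 := by
        have := (pow_eq_zero_iff (by norm_num : (3:ℕ) ≠ 0)).mp h8
        linear_combination this
      exact hnm (by rw [hm0, hn8]; linear_combination 4*h2)
    · by_cases hm8 : m + 8 = 0
      · -- m = -8 forces n = m
        exfalso
        have h0 : (n + 8)*(m+2) = 0 := by linear_combination hsub + 6*hm8
        have hn8 := (mul_eq_zero.mp h0).resolve_right hm2
        exact hnm (by linear_combination hm8 - hn8)
      · -- main degenerate branch: the 1728-pair
        have hbig : (27:F)*((m^2-20*m-8)^2*(m+8)^2) = 0 := by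
          linear_combination (-(m+2)^3)*hC +
            (-4*n^2 + 8*n^2*m - n^2*m^2 - 5*n^2*m^3 + n^2*m^4 + n^2*m^5
             - 160*n - 1696*n*m - 2938*n*m^2 - 1523*n*m^3 - 239*n*m^4 - 5*n*m^5
             - 3328 - 18112*m - 26068*m^2 - 4862*m^3 - 131*m^4 + 13*m^5)*hsub
        have h1 := (mul_eq_zero.mp hbig).resolve_left (h27 h3)
        rcases mul_eq_zero.mp h1 with h1 | h1
        · have h20 : m^2 = 20*m + 8 := by
            have := (pow_eq_zero_iff (two_ne_zero)).mp h1
            linear_combination this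
          have hn20 : n = 20 - m := by
            have h0 : (m+2)*(n - (20 - m)) = 0 := by linear_combination hsub + h20
            have := (mul_eq_zero.mp h0).resolve_left hm2
            linear_combination this
          left
          constructor
          · linear_combination (n-m)*hn20 + h20
          · linear_combination hn20
        · exact absurd ((pow_eq_zero_iff (two_ne_zero)).mp h1) hm8
  · -- generic branch: explicit cube root
    right
    refine ⟨(9*n*(m+2)^2 - 3*(4-m)*(n+8+m-n*m)) / (9*(4-m)^2 - 3*(m+2)*(n+8+m-n*m)), ?_, ?_⟩
    · rw [div_pow, div_eq_iff (pow_ne_zero 3 hD)]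
      linear_combination (-27*(n*(m+2)^3 + (m-4)^3))*hC
    · have e1 : (9*n*(m+2)^2 - 3*(4-m)*(n+8+m-n*m)) / (9*(4-m)^2 - 3*(m+2)*(n+8+m-n*m)) + 2
          = ((9*n*(m+2)^2 - 3*(4-m)*(n+8+m-n*m)) + 2*(9*(4-m)^2 - 3*(m+2)*(n+8+m-n*m)))
            / (9*(4-m)^2 - 3*(m+2)*(n+8+m-n*m)) := by
        rw [eq_div_iff hD, add_mul, div_mul_cancel₀ _ hD]
      have e2 : (9*n*(m+2)^2 - 3*(4-m)*(n+8+m-n*m)) / (9*(4-m)^2 - 3*(m+2)*(n+8+m-n*m)) - 1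
          = ((9*n*(m+2)^2 - 3*(4-m)*(n+8+m-n*m)) - (9*(4-m)^2 - 3*(m+2)*(n+8+m-n*m)))
            / (9*(4-m)^2 - 3*(m+2)*(n+8+m-n*m)) := by
        rw [eq_div_iff hD, sub_mul, div_mul_cancel₀ _ hD, one_mul]
      rw [e1, e2, div_pow, div_pow, ← mul_div_assoc,
        div_eq_div_iff (pow_ne_zero 3 hD) (pow_ne_zero 3 hD)]
      linear_combination ((-27*(m^2-20*m-8)*(m+8)*(m-1)) * (9*(4-m)^2 - 3*(m+2)*(n+8+m-n*m))^3)*hC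


lemma iota_ne_one (h3 : (3:F) ≠ 0) {c : F} (hc3 : c^3 ≠ 1) : (c+2)^3/(c-1)^3 ≠ 1 := by
  have hc1 : c - 1 ≠ 0 := by
    intro h; exact hc3 (by rw [show c = 1 by linear_combination h]; norm_num)
  intro h
  have h' := (div_eq_one_iff_eq (pow_ne_zero 3 hc1)).mp h
  have h9' : (9:F) * (c^2+c+1) = 0 := by linear_combination h'
  have hcc := (mul_eq_zero.mp h9').resolve_left (h9 h3)
  exact hc3 (by linear_combination (c-1)*hcc)

lemma hh_iota (h3 : (3:F) ≠ 0) {c : F} (hc : c^3 ≠ 1) :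
    hh ((c+2)^3/(c-1)^3) = hh (c^3) := by
  have hc1 : c - 1 ≠ 0 := by
    intro h; exact hc (by rw [show c = 1 by linear_combination h]; norm_num)
  have hq : c^2 + c + 1 ≠ 0 := by
    intro h; exact hc (by linear_combination (c-1)*h)
  have hd : c^3 - 1 ≠ 0 := sub_ne_zero.2 hc
  have hm1 : (c+2)^3/(c-1)^3 - 1 ≠ 0 := by
    have e : (c+2)^3/(c-1)^3 - 1 = 9*(c^2+c+1)/(c-1)^3 := by
      field_simp; ring
    rw [e]
    exact div_ne_zero (mul_ne_zero (h9 h3) hq) (pow_ne_zero 3 hc1)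
  rw [hh, hh, div_eq_div_iff (pow_ne_zero 3 hm1) (pow_ne_zero 3 hd)]
  field_simp
  ring



section WithFintype
variable [Fintype F]



lemma cube_inj (h3 : (3:F) ≠ 0) (hq : Fintype.card F % 3 = 2) {x y : F}
    (h : x^3 = y^3) : x = y := by
  rcases eq_or_ne y 0 with rfl | hy
  · simpa using pow_eq_zero_iff (n := 3) (by norm_num) |>.mp (by simpa using h)
  · have hxy : (x/y)^3 = 1 := by
      rw [div_pow, h, div_self (pow_ne_zero 3 hy)]
    set t := x/y with ht
    have hfac : (t - 1)*(t^2 + t + 1) = 0 := by linear_combination hxy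
    rcases mul_eq_zero.mp hfac with h0 | h0
    · have h1 : x/y = 1 := by rw [← ht]; linear_combination h0
      exact (div_eq_one_iff_eq hy).mp h1
    · exfalso
      have ht1 : t ≠ 1 := by
        intro h1; rw [h1] at h0; exact h3 (by linear_combination h0)
      have ht0 : t ≠ 0 := by
        intro h1; rw [h1] at h0; simp at h0
      set u : Fˣ := Units.mk0 t ht0 with hu
      have hu3 : u^3 = 1 := by
        ext; push_cast [hu]; exact hxy
      have hu1 : u ≠ 1 := by
        intro h1
        exact ht1 (by rw [hu] at h1; exact congrArg Units.val h1)
      have hord : orderOf u = 3 := orderOf_eq_prime hu3 hu1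
      have hdvd : 3 ∣ Nat.card Fˣ := hord ▸ orderOf_dvd_natCard u
      rw [Nat.card_units, Nat.card_eq_fintype_card] at hdvd
      have hcard : 1 ≤ Fintype.card F := Fintype.card_pos
      omega

lemma exists_omega (hq : Fintype.card F % 3 = 1) (hlt : 1 < Fintype.card F) :
    ∃ ω : F, ω ≠ 1 ∧ ω^2 + ω + 1 = 0 ∧ ω^3 = 1 := by
  obtain ⟨g, hg⟩ := IsCyclic.exists_generator (α := Fˣ)
  have hord : orderOf g = Nat.card Fˣ := orderOf_eq_card_of_forall_mem_zpowers hg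
  rw [Nat.card_units, Nat.card_eq_fintype_card] at hord
  set q := Fintype.card F with hqdef
  set u : Fˣ := g ^ ((q-1)/3) with hu
  have h3q : 3 * ((q-1)/3) = q - 1 := by omega
  have hu3 : u^3 = 1 := by
    rw [hu, ← pow_mul, mul_comm, h3q, ← hord]
    exact pow_orderOf_eq_one g
  have hu1 : u ≠ 1 := by
    intro h1
    have := orderOf_dvd_of_pow_eq_one (n := (q-1)/3) (by rw [← hu]; exact h1)
    rw [hord] at this
    have := Nat.le_of_dvd (by omega) this
    omega
  refine ⟨(u : F), ?_, ?_, ?_⟩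
  · intro h1; exact hu1 (Units.ext h1)
  · have h3 : ((u:F))^3 = 1 := by
      rw [← Units.val_pow_eq_pow_val, hu3]; rfl
    have hfac : ((u:F) - 1)*(((u:F))^2 + (u:F) + 1) = 0 := by linear_combination h3
    have hne : (u:F) - 1 ≠ 0 := sub_ne_zero.2 (fun h1 => hu1 (Units.ext h1))
    exact (mul_eq_zero.mp hfac).resolve_left hne
  · rw [← Units.val_pow_eq_pow_val, hu3]; rfl

lemma cube_eq_one {F : Type*} [Field F] {ω x : F} (hω : ω^2 + ω + 1 = 0) (hω3 : ω^3 = 1)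
    (hx : x^3 = 1) : x = 1 ∨ x = ω ∨ x = ω^2 := by
  have h0 : (x-1)*((x-ω)*(x-ω^2)) = 0 := by
    linear_combination hx + (x - x^2)*hω + (x-1)*hω3
  rcases mul_eq_zero.mp h0 with h | h
  · exact Or.inl (by linear_combination h)
  rcases mul_eq_zero.mp h with h | h
  · exact Or.inr (Or.inl (by linear_combination h))
  · exact Or.inr (Or.inr (by linear_combination h))

lemma cube_roots {F : Type*} [Field F] {ω c d : F} (hω : ω^2 + ω + 1 = 0) (hω3 : ω^3 = 1)
    (hc : c ≠ 0) (h : d^3 = c^3) : d = c ∨ d = ω*c ∨ d = ω^2*c := by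
  have hdc : (d/c)^3 = 1 := by rw [div_pow, h, div_self (pow_ne_zero 3 hc)]
  rcases cube_eq_one hω hω3 hdc with h0 | h0 | h0
  · exact Or.inl (by simpa using (div_eq_iff hc).mp h0)
  · exact Or.inr (Or.inl ((div_eq_iff hc).mp h0))
  · exact Or.inr (Or.inr ((div_eq_iff hc).mp h0))


section Counting
open Finset
open scoped Classical

noncomputable def fib (n : F) : Finset F := univ.filter (fun m => m ≠ 1 ∧ hh m = hh n)

lemma mem_fib {n m : F} : m ∈ fib n ↔ m ≠ 1 ∧ hh m = hh n := by simp [fib]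

lemma fib_zero (h3 : (3:F) ≠ 0) : fib (0:F) = {0, -8} := by
  ext m
  simp only [mem_fib, mem_insert, mem_singleton]
  constructor
  · rintro ⟨hm1, hm⟩
    rw [hh_zero, hh] at hm
    rcases div_eq_zero_iff.mp hm with hnum | hden
    · rcases mul_eq_zero.mp hnum with h0 | h0
      · rcases mul_eq_zero.mp h0 with h0 | h0
        · exact absurd h0 (h27 h3)
        · exact Or.inl h0
      · have := (pow_eq_zero_iff (by norm_num : (3:ℕ) ≠ 0)).mp h0
        exact Or.inr (by linear_combination this)
    · exact absurd ((pow_eq_zero_iff (by norm_num : (3:ℕ) ≠ 0)).mp hden)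
        (sub_ne_zero.2 hm1)
  · rintro (rfl | rfl)
    · exact ⟨zero_ne_one, rfl⟩
    · refine ⟨?_, by rw [hh_neg8, hh_zero]⟩
      intro h
      have h9' : (3:F)^2 = 0 := by linear_combination -h
      exact h3 ((pow_eq_zero_iff (by norm_num : (2:ℕ) ≠ 0)).mp h9')

lemma fib_1728 (h3 : (3:F) ≠ 0) {n : F} (h20 : n^2 = 20*n+8) (hn1 : n ≠ 1) :
    fib n = {n, 20 - n} := by
  have hne1 : (20:F) - n ≠ 1 := by
    intro h
    exact (h27 h3) (by linear_combination -h20 - (n-1)*h)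
  ext m
  simp only [mem_fib, mem_insert, mem_singleton]
  constructor
  · rintro ⟨hm1, hm⟩
    have hm' : hh m = 1728 := hm.trans (hh_1728 h3 h20 hn1)
    have hq' : m^2 = 20*m+8 := (hh_eq_1728_iff h3 hm1).mp hm'
    have hfac : (m - n)*(m + n - 20) = 0 := by linear_combination hq' - h20
    rcases mul_eq_zero.mp hfac with h | h
    · exact Or.inl (by linear_combination h)
    · exact Or.inr (by linear_combination h)
  · rintro (rfl | rfl)
    · exact ⟨hn1, rfl⟩
    · refine ⟨hne1, ?_⟩
      rw [hh_1728 h3 h20 hn1, hh_1728 h3 (by linear_combination h20) hne1]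

lemma fib_nc (h3 : (3:F) ≠ 0) {n : F} (hn1 : n ≠ 1) (hnc : ¬ ∃ c : F, c^3 = n) :
    fib n = {n} := by
  ext m
  simp only [mem_fib, mem_singleton]
  constructor
  · rintro ⟨hm1, hm⟩
    by_contra hmn
    rcases complete h3 hn1 hm1 hmn hm with ⟨h20, _⟩ | ⟨d, hd, _⟩
    · apply hnc
      by_cases h2 : (2:F) = 0
      · have hsq : n^2 = 0 := by linear_combination h20 + (10*n+4)*h2
        exact ⟨0, by rw [(pow_eq_zero_iff (by norm_num : (2:ℕ) ≠ 0)).mp hsq]; norm_num⟩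
      · have h216 : (216:F) ≠ 0 := by
          intro h
          have : ((2:F)*3)^3 = 0 := by rw [show ((2:F)*3)^3 = 216 by norm_num, h]
          rcases mul_eq_zero.mp ((pow_eq_zero_iff (by norm_num : (3:ℕ) ≠ 0)).mp this)
            with h' | h'
          · exact h2 h'
          · exact h3 h'
        refine ⟨(n-4)/6, ?_⟩
        rw [div_pow, div_eq_iff (by rw [show ((6:F))^3 = 216 by norm_num]; exact h216)]
        linear_combination (n+8)*h20
    · exact hnc ⟨d, hd⟩
  · rintro rfl; exact ⟨hn1, rfl⟩

lemma card_fib2 (h3 : (3:F) ≠ 0) (hq : Fintype.card F % 3 = 2) {n : F} (hn1 : n ≠ 1)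
    (hnx : ¬((2:F) = 0 ∧ n = 0)) : (fib n).card = 2 := by
  by_cases h20 : n^2 = 20*n+8
  · have h2 : (2:F) ≠ 0 := by
      intro h2; apply hnx; refine ⟨h2, ?_⟩
      have hsq : n^2 = 0 := by linear_combination h20 + (10*n+4)*h2
      exact (pow_eq_zero_iff (by norm_num : (2:ℕ) ≠ 0)).mp hsq
    rw [fib_1728 h3 h20 hn1, card_insert_of_notMem, card_singleton]
    simp only [mem_singleton]
    intro h
    have h10 : (2:F)*(n - 10) = 0 := by linear_combination h
    have hn10 : n = 10 := by
      have := (mul_eq_zero.mp h10).resolve_left h2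
      linear_combination this
    rw [hn10] at h20
    exact (mul_ne_zero (mul_ne_zero h2 h2) (h27 h3)) (by linear_combination -h20)
  · obtain ⟨c, hc⟩ : ∃ c : F, c^3 = n :=
      Finite.surjective_of_injective (f := fun x : F => x^3)
        (fun a b hab => cube_inj h3 hq hab) n
    have hc3 : c^3 ≠ 1 := by rw [hc]; exact hn1
    have hc1 : c - 1 ≠ 0 := by
      intro h; exact hc3 (by rw [show c = 1 by linear_combination h]; norm_num)
    have hp1 : (c+2)^3/(c-1)^3 ≠ 1 := iota_ne_one h3 hc3
    have hhp : hh ((c+2)^3/(c-1)^3) = hh n := by rw [← hc]; exact hh_iota h3 hc3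
    have hpn : (c+2)^3/(c-1)^3 ≠ n := by
      intro h
      have hH : (c+2)^3 = c^3*(c-1)^3 := by
        rw [hc]; rw [div_eq_iff (pow_ne_zero 3 hc1)] at h; linear_combination h
      rcases subA h3 hH with h' | h' | h'
      · rw [hc] at h'; exact h20 (by linear_combination h')
      · exact hc3 h'
      · have hcm2 : c = -2 := cube_inj h3 hq (by rw [h']; norm_num)
        have hn8 : n = -8 := by rw [← hc, h']
        rw [hcm2] at h
        have h08 : (0:F) = -8 := by
          rw [show ((-2:F)+2)^3 = 0 by norm_num] at h
          rw [hn8] at h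
          rw [zero_div] at h
          exact h
        have h2 : (2:F) = 0 := by
          have h8 : (2:F)^3 = 0 := by linear_combination h08
          exact (pow_eq_zero_iff (by norm_num : (3:ℕ) ≠ 0)).mp h8
        exact hnx ⟨h2, by rw [hn8]; linear_combination -4*h2⟩
    have hfib : fib n = {n, (c+2)^3/(c-1)^3} := by
      ext m
      simp only [mem_fib, mem_insert, mem_singleton]
      constructor
      · rintro ⟨hm1, hm⟩
        by_cases hmn : m = n
        · exact Or.inl hmn
        rcases complete h3 hn1 hm1 hmn hm with ⟨h20', _⟩ | ⟨d, hd, hdm⟩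
        · exact absurd h20' h20
        · have hdc : d = c := cube_inj h3 hq (by rw [hd, hc])
          rw [hdc] at hdm
          right
          rw [eq_div_iff (pow_ne_zero 3 hc1)]
          linear_combination -hdm
      · rintro (rfl | rfl)
        · exact ⟨hn1, rfl⟩
        · exact ⟨hp1, hhp⟩
    rw [hfib, card_insert_of_notMem (by simpa using (Ne.symm hpn)), card_singleton]

lemma fib_stab (h3 : (3:F) ≠ 0) {n m : F} (hn1 : n ≠ 1) (hn0 : n ≠ 0) (hn8 : n ≠ -8)
    (h20 : ¬ n^2 = 20*n+8) (hm : m ∈ fib n) :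
    m ≠ 0 ∧ m ≠ -8 ∧ ¬ m^2 = 20*m+8 := by
  obtain ⟨hm1, hmh⟩ := mem_fib.mp hm
  have hne := hh_ne_zero h3 hn0 hn8 hn1
  refine ⟨?_, ?_, ?_⟩
  · rintro rfl; rw [hh_zero] at hmh; exact hne hmh.symm
  · rintro rfl; rw [hh_neg8] at hmh; exact hne hmh.symm
  · intro hq'
    have h1728 : hh n = 1728 := hmh.symm.trans (hh_1728 h3 hq' hm1)
    exact h20 ((hh_eq_1728_iff h3 hn1).mp h1728)

lemma fib_cube (h3 : (3:F) ≠ 0) {n m c : F} (hn1 : n ≠ 1) (hc : c^3 = n)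
    (h20 : ¬ n^2 = 20*n+8) (hm : m ∈ fib n) : ∃ e : F, e^3 = m := by
  obtain ⟨hm1, hmh⟩ := mem_fib.mp hm
  by_cases hmn : m = n
  · exact ⟨c, by rw [hc, hmn]⟩
  rcases complete h3 hn1 hm1 hmn hmh with ⟨h', _⟩ | ⟨d, hd, hdm⟩
  · exact absurd h' h20
  · have hd1 : d - 1 ≠ 0 := by
      intro h; apply hn1; rw [← hd, show d = 1 by linear_combination h]; norm_num
    exact ⟨(d+2)/(d-1), by
      rw [div_pow, hdm, mul_div_assoc, div_self (pow_ne_zero 3 hd1), mul_one]⟩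

lemma card_fib4 (h3 : (3:F) ≠ 0) {ω : F} (hω1 : ω ≠ 1) (hωr : ω^2+ω+1 = 0) (hω3 : ω^3 = 1)
    {n c : F} (hn1 : n ≠ 1) (hc : c^3 = n) (hn0 : n ≠ 0) (hn8 : n ≠ -8)
    (h20 : ¬ n^2 = 20*n+8) : (fib n).card = 4 := by
  have hω0 : ω ≠ 0 := by
    intro h; rw [h] at hωr; exact one_ne_zero (by linear_combination hωr)
  have hc0 : c ≠ 0 := fun h => hn0 (by rw [← hc, h]; norm_num)
  have hω2r : (ω^2)^2 + ω^2 + 1 = 0 := by linear_combination hωr + ω*hω3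
  have hωc3 : (ω*c)^3 = n := by rw [mul_pow, hω3, one_mul, hc]
  have hω2c3 : (ω^2*c)^3 = n := by
    rw [mul_pow, ← pow_mul]
    rw [show ω^(2*3) = (ω^3)^2 by ring, hω3, one_pow, one_mul, hc]
  have hd3 : ∀ d : F, d^3 = n → (d - 1 ≠ 0 ∧ (d+2)^3/(d-1)^3 ∈ fib n ∧ (d+2)^3/(d-1)^3 ≠ n) := by
    intro d hd
    have hdc3 : d^3 ≠ 1 := by rw [hd]; exact hn1
    have hd1 : d - 1 ≠ 0 := fun h => hdc3 (by rw [show d = 1 by linear_combination h]; norm_num)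
    refine ⟨hd1, ?_, ?_⟩
    · exact mem_fib.mpr ⟨iota_ne_one h3 hdc3, by rw [← hd]; exact hh_iota h3 hdc3⟩
    · intro h
      have hH : (d+2)^3 = d^3*(d-1)^3 := by
        rw [div_eq_iff (pow_ne_zero 3 hd1)] at h
        rw [hd]; linear_combination h
      rcases subA h3 hH with h' | h' | h'
      · rw [hd] at h'; exact h20 (by linear_combination h')
      · exact hdc3 h'
      · exact hn8 (by rw [← hd, h'])
  have hdist : ∀ d : F, d^3 = n → d ≠ 0 → ∀ ζ : F, ζ^2+ζ+1 = 0 →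
      (ζ*d+2)^3/(ζ*d-1)^3 ≠ (d+2)^3/(d-1)^3 := by
    intro d hd hd0 ζ hζ h
    have hζ3 : ζ^3 = 1 := by linear_combination (ζ-1)*hζ
    have hzd3 : (ζ*d)^3 = n := by rw [mul_pow, hζ3, one_mul, hd]
    obtain ⟨hd1, -, -⟩ := hd3 d hd
    obtain ⟨hzd1, -, -⟩ := hd3 (ζ*d) hzd3
    rw [div_eq_div_iff (pow_ne_zero 3 hzd1) (pow_ne_zero 3 hd1)] at h
    have H : ((ζ*d+2)*(d-1))^3 = ((d+2)*(ζ*d-1))^3 := by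
      rw [mul_pow, mul_pow]; linear_combination h
    rcases subB h3 hζ hd0 H with h' | h' | h'
    · rw [hd] at h'; exact h20 (by linear_combination h')
    · rw [hd] at h'; exact hn1 h'
    · rw [hd] at h'; exact hn8 h'
  obtain ⟨hc1, hm0fib, hm0n⟩ := hd3 c hc
  obtain ⟨hc1', hm1fib, hm1n⟩ := hd3 (ω*c) hωc3
  obtain ⟨hc1'', hm2fib, hm2n⟩ := hd3 (ω^2*c) hω2c3
  have h12' := hdist c hc hc0 ω hωr
  have h13' := hdist c hc hc0 (ω^2) hω2r
  have h23' := hdist (ω*c) hωc3 (mul_ne_zero hω0 hc0) ω hωr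
  rw [show ω*(ω*c) = ω^2*c by ring] at h23'
  have hfib : fib n = insert n (insert ((c+2)^3/(c-1)^3)
      (insert ((ω*c+2)^3/(ω*c-1)^3) {(ω^2*c+2)^3/(ω^2*c-1)^3})) := by
    ext m
    simp only [mem_fib, mem_insert, mem_singleton]
    constructor
    · rintro ⟨hm1, hm⟩
      by_cases hmn : m = n
      · exact Or.inl hmn
      rcases complete h3 hn1 hm1 hmn hm with ⟨h20', -⟩ | ⟨d, hd, hdm⟩
      · exact absurd h20' h20
      rcases cube_roots hωr hω3 hc0 (by rw [hd, hc]) with rfl | rfl | rfl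
      · right; left
        rw [eq_div_iff (pow_ne_zero 3 hc1)]; linear_combination -hdm
      · right; right; left
        rw [eq_div_iff (pow_ne_zero 3 hc1')]; linear_combination -hdm
      · right; right; right
        rw [eq_div_iff (pow_ne_zero 3 hc1'')]; linear_combination -hdm
    · rintro (rfl | rfl | rfl | rfl)
      · exact ⟨hn1, rfl⟩
      · exact mem_fib.mp hm0fib
      · exact mem_fib.mp hm1fib
      · exact mem_fib.mp hm2fib
  rw [hfib]
  rw [card_insert_of_notMem (by
        simp only [mem_insert, mem_singleton]
        push_neg
        exact ⟨Ne.symm hm0n, Ne.symm hm1n, Ne.symm hm2n⟩),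
      card_insert_of_notMem (by
        simp only [mem_insert, mem_singleton]
        push_neg
        exact ⟨Ne.symm h12', Ne.symm h13'⟩),
      card_insert_of_notMem (by
        simp only [mem_singleton]
        exact Ne.symm h23'),
      card_singleton]

lemma cube_of_1728 (h3 : (3:F) ≠ 0) {x : F} (h20 : x^2 = 20*x+8) : ∃ c : F, c^3 = x := by
  by_cases h2 : (2:F) = 0
  · have hsq : x^2 = 0 := by linear_combination h20 + (10*x+4)*h2
    exact ⟨0, by rw [(pow_eq_zero_iff (by norm_num : (2:ℕ) ≠ 0)).mp hsq]; norm_num⟩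
  · have h216 : (216:F) ≠ 0 := by
      intro h
      have h6 : ((2:F)*3)^3 = 0 := by rw [show ((2:F)*3)^3 = 216 by norm_num, h]
      rcases mul_eq_zero.mp ((pow_eq_zero_iff (by norm_num : (3:ℕ) ≠ 0)).mp h6) with h' | h'
      · exact h2 h'
      · exact h3 h'
    refine ⟨(x-4)/6, ?_⟩
    rw [div_pow, div_eq_iff (by rw [show ((6:F))^3 = 216 by norm_num]; exact h216)]
    linear_combination (x+8)*h20

theorem count2 (h3 : (3:F) ≠ 0) (hq : Fintype.card F % 3 = 2) :
    ((univ.filter (fun n : F => n ≠ 1)).image hh).card = Fintype.card F / 2 := by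
  have hcard1 : (univ.filter (fun n : F => n ≠ 1)).card = Fintype.card F - 1 := by
    rw [Finset.filter_ne' univ 1, Finset.card_erase_of_mem (mem_univ 1), Finset.card_univ]
  have hmaps : ∀ n ∈ univ.filter (fun n : F => n ≠ 1),
      hh n ∈ (univ.filter (fun n : F => n ≠ 1)).image hh := fun n hn => mem_image_of_mem hh hn
  have hsum := Finset.card_eq_sum_card_fiberwise hmaps
  have hfibeq : ∀ n : F, (univ.filter (fun m : F => m ≠ 1)).filter (fun a => hh a = hh n)
      = fib n := by
    intro n; ext m; simp [fib, and_assoc]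
  by_cases h2 : (2:F) = 0
  · -- char 2
    have h0mem : hh (0:F) ∈ (univ.filter (fun n : F => n ≠ 1)).image hh :=
      mem_image_of_mem hh (by simp)
    rw [← Finset.add_sum_erase _ _ h0mem] at hsum
    have hrest : ∀ j ∈ ((univ.filter (fun n : F => n ≠ 1)).image hh).erase (hh 0),
        ((univ.filter (fun n : F => n ≠ 1)).filter (fun a => hh a = j)).card = 2 := by
      intro j hj
      obtain ⟨hjne, hjmem⟩ := Finset.mem_erase.mp hj
      obtain ⟨n, hn, rfl⟩ := Finset.mem_image.mp hjmem
      have hn1 : n ≠ 1 := (Finset.mem_filter.mp hn).2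
      rw [hfibeq n]
      apply card_fib2 h3 hq hn1
      rintro ⟨-, rfl⟩
      exact hjne rfl
    rw [Finset.sum_congr rfl hrest] at hsum
    rw [Finset.sum_const, smul_eq_mul] at hsum
    have hzfib : ((univ.filter (fun m : F => m ≠ 1)).filter (fun a => hh a = hh 0)).card = 1 := by
      rw [hfibeq 0, fib_zero h3, show ((-8:F)) = 0 by linear_combination -4*h2]
      simp
    rw [hzfib] at hsum
    rw [Finset.card_erase_of_mem h0mem] at hsum
    have hqpos : 1 ≤ Fintype.card F := Fintype.card_pos
    have himpos : 1 ≤ ((univ.filter (fun n : F => n ≠ 1)).image hh).card :=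
      Finset.card_pos.mpr ⟨hh 0, h0mem⟩
    omega
  · -- odd char
    have hall : ∀ j ∈ (univ.filter (fun n : F => n ≠ 1)).image hh,
        ((univ.filter (fun n : F => n ≠ 1)).filter (fun a => hh a = j)).card = 2 := by
      intro j hjmem
      obtain ⟨n, hn, rfl⟩ := Finset.mem_image.mp hjmem
      have hn1 : n ≠ 1 := (Finset.mem_filter.mp hn).2
      rw [hfibeq n]
      exact card_fib2 h3 hq hn1 (fun h => h2 h.1)
    rw [Finset.sum_congr rfl hall, Finset.sum_const, smul_eq_mul] at hsum
    have hqpos : 1 ≤ Fintype.card F := Fintype.card_pos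
    omega

theorem count1 (h3 : (3:F) ≠ 0) (hq : Fintype.card F % 3 = 1) :
    ((univ.filter (fun n : F => n ≠ 1)).image hh).card = (3*Fintype.card F + 1) / 4 := by
  have hlt : 1 < Fintype.card F := Fintype.one_lt_card
  obtain ⟨ω, hω1, hωr, hω3⟩ := exists_omega hq hlt
  have hω0 : ω ≠ 0 := by
    intro h; rw [h] at hωr; exact one_ne_zero (by linear_combination hωr)
  have hω21 : ω^2 ≠ 1 := by
    intro h
    have hω2 : ω = -2 := by linear_combination hωr - h
    rw [hω2] at hωr
    exact h3 (by linear_combination hωr)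
  have hω2ω : ω^2 ≠ ω := by
    intro h
    have h0 : ω*(ω-1) = 0 := by linear_combination h
    rcases mul_eq_zero.mp h0 with h' | h'
    · exact hω0 h'
    · exact hω1 (by linear_combination h')
  set S : Finset F := univ.filter (fun n : F => n ≠ 1) with hS
  set KC : Finset F := S.filter (fun n => ∃ c : F, c^3 = n) with hKC
  set SP : Finset F := S.filter (fun n => n = 0 ∨ n = -8 ∨ n^2 = 20*n+8) with hSP
  set K4 : Finset F := KC \ SP with hK4
  set NC : Finset F := S \ KC with hNC
  have hKCS : KC ⊆ S := filter_subset _ _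
  have hSPKC : SP ⊆ KC := by
    intro x hx
    obtain ⟨hxS, hx0⟩ := mem_filter.mp hx
    refine mem_filter.mpr ⟨hxS, ?_⟩
    rcases hx0 with rfl | rfl | h20
    · exact ⟨0, by norm_num⟩
    · exact ⟨-2, by norm_num⟩
    · exact cube_of_1728 h3 h20
  -- basic membership facts
  have hmemS : ∀ x : F, x ∈ S ↔ x ≠ 1 := by intro x; simp [hS]
  have hmemKC : ∀ x : F, x ∈ KC ↔ (x ≠ 1 ∧ ∃ c : F, c^3 = x) := by
    intro x; simp [hKC, hS, and_assoc]
  -- card S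
  have hcardS : S.card = Fintype.card F - 1 := by
    rw [hS, Finset.filter_ne' univ 1, Finset.card_erase_of_mem (mem_univ 1), Finset.card_univ]
  -- card KC
  have hcardKC : 3 * KC.card = Fintype.card F - 1 := by
    classical
    set S' : Finset F := univ.filter (fun c : F => c ≠ 1 ∧ c ≠ ω ∧ c ≠ ω^2) with hS'
    have hS'card : S'.card = Fintype.card F - 3 := by
      have he : S' = univ \ ({1, ω, ω^2} : Finset F) := by
        ext x
        simp [hS', not_or]
      rw [he, Finset.card_sdiff_of_subset (subset_univ _), Finset.card_univ]
      congr 1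
      rw [card_insert_of_notMem (by simp [Ne.symm hω1, Ne.symm hω21]),
          card_insert_of_notMem (by simp [Ne.symm hω2ω]), card_singleton]
    have hmap : ∀ c ∈ S', c^3 ∈ KC := by
      intro c hcS
      obtain ⟨-, hc1, hcω, hcω2⟩ := mem_filter.mp hcS
      refine (hmemKC _).mpr ⟨?_, ⟨c, rfl⟩⟩
      intro h
      rcases cube_eq_one hωr hω3 h with h' | h' | h'
      · exact hc1 h'
      · exact hcω h'
      · exact hcω2 h'
    have hsum' := Finset.card_eq_sum_card_fiberwise hmap
    have h0KC : (0:F) ∈ KC := (hmemKC _).mpr ⟨zero_ne_one, ⟨0, by norm_num⟩⟩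
    rw [← Finset.add_sum_erase _ _ h0KC] at hsum'
    have hfib0 : (S'.filter (fun c => c^3 = (0:F))).card = 1 := by
      have : S'.filter (fun c => c^3 = (0:F)) = {0} := by
        ext x
        simp only [mem_filter, mem_singleton, hS', Finset.mem_filter, mem_univ, true_and]
        constructor
        · rintro ⟨-, hx⟩
          exact (pow_eq_zero_iff (by norm_num : (3:ℕ) ≠ 0)).mp hx
        · rintro rfl
          refine ⟨⟨zero_ne_one, fun h => hω0 h.symm, fun h => (pow_ne_zero 2 hω0) h.symm⟩, by norm_num⟩
      rw [this, card_singleton]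
    have hfibs : ∀ n ∈ KC.erase 0, (S'.filter (fun c => c^3 = n)).card = 3 := by
      intro n hn
      obtain ⟨hn0, hnKC⟩ := Finset.mem_erase.mp hn
      obtain ⟨hn1, c, hc⟩ := (hmemKC _).mp hnKC
      have hc0 : c ≠ 0 := fun h => hn0 (by rw [← hc, h]; norm_num)
      have hSmem : ∀ d : F, d^3 = n → d ∈ S' := by
        intro d hd
        have hd1 : d^3 ≠ 1 := by rw [hd]; exact hn1
        refine mem_filter.mpr ⟨mem_univ _, ?_, ?_, ?_⟩
        · intro h; exact hd1 (by rw [h]; norm_num)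
        · intro h; exact hd1 (by rw [h]; exact hω3)
        · intro h
          exact hd1 (by rw [h, ← pow_mul, show 2*3 = 3*2 by norm_num, pow_mul, hω3, one_pow])
      have : S'.filter (fun d => d^3 = n) = {c, ω*c, ω^2*c} := by
        ext d
        simp only [mem_filter, mem_insert, mem_singleton]
        constructor
        · rintro ⟨-, hd⟩
          exact cube_roots hωr hω3 hc0 (by rw [hd, hc])
        · rintro (rfl | rfl | rfl)
          · exact ⟨hSmem _ hc, hc⟩
          · have h' : (ω*c)^3 = n := by rw [mul_pow, hω3, one_mul, hc]
            exact ⟨hSmem _ h', h'⟩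
          · have h' : (ω^2*c)^3 = n := by
              rw [mul_pow, ← pow_mul, show 2*3 = 3*2 by norm_num, pow_mul, hω3, one_pow, one_mul, hc]
            exact ⟨hSmem _ h', h'⟩
      rw [this]
      rw [card_insert_of_notMem (by
            simp only [mem_insert, mem_singleton]
            push_neg
            constructor
            · intro h
              exact hω1 (mul_right_cancel₀ hc0 (by linear_combination -h))
            · intro h
              exact hω21 (mul_right_cancel₀ hc0 (by linear_combination -h))),
          card_insert_of_notMem (by
            simp only [mem_singleton]
            intro h
            exact hω2ω (mul_right_cancel₀ hc0 (by linear_combination -h))),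
          card_singleton]
    rw [Finset.sum_congr rfl hfibs, Finset.sum_const, smul_eq_mul, hfib0,
      Finset.card_erase_of_mem h0KC] at hsum'
    have hKCpos : 1 ≤ KC.card := Finset.card_pos.mpr ⟨0, h0KC⟩
    omega
  -- decomposition of the image
  have hSsplit : NC ∪ KC = S := Finset.sdiff_union_of_subset hKCS
  have hKCsplit : K4 ∪ SP = KC := Finset.sdiff_union_of_subset hSPKC
  have himage : S.image hh = (NC.image hh) ∪ ((K4.image hh) ∪ (SP.image hh)) := by
    rw [← Finset.image_union, ← Finset.image_union, hKCsplit, hSsplit]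
  -- facts about K4 elements
  have hK4facts : ∀ b ∈ K4, b ≠ 1 ∧ (∃ c : F, c^3 = b) ∧ b ≠ 0 ∧ b ≠ -8 ∧ ¬ b^2 = 20*b+8 := by
    intro b hb
    obtain ⟨hbKC, hbSP⟩ := Finset.mem_sdiff.mp hb
    obtain ⟨hb1, hbc⟩ := (hmemKC _).mp hbKC
    have hbS : b ∈ S := hKCS hbKC
    have hbn : ¬(b = 0 ∨ b = -8 ∨ b^2 = 20*b+8) := by
      intro h; exact hbSP (mem_filter.mpr ⟨hbS, h⟩)
    push_neg at hbn
    exact ⟨hb1, hbc, hbn.1, hbn.2.1, hbn.2.2⟩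
  -- disjointness
  have hdisj1 : Disjoint (NC.image hh) ((K4.image hh) ∪ (SP.image hh)) := by
    rw [Finset.disjoint_left]
    intro j hj1 hj2
    obtain ⟨a, ha, rfl⟩ := Finset.mem_image.mp hj1
    obtain ⟨haS, haKC⟩ := Finset.mem_sdiff.mp ha
    have ha1 : a ≠ 1 := (hmemS _).mp haS
    have hanc : ¬ ∃ c : F, c^3 = a := fun h => haKC ((hmemKC _).mpr ⟨ha1, h⟩)
    have hbmem : ∃ b ∈ KC, hh b = hh a := by
      rw [← Finset.image_union, hKCsplit] at hj2
      obtain ⟨b, hb, hba⟩ := Finset.mem_image.mp hj2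
      exact ⟨b, hb, hba⟩
    obtain ⟨b, hbKC, hba⟩ := hbmem
    have hb1 : b ≠ 1 := (hmemS _).mp (hKCS hbKC)
    have hbfib : b ∈ fib a := mem_fib.mpr ⟨hb1, hba⟩
    rw [fib_nc h3 ha1 hanc] at hbfib
    have : b = a := Finset.mem_singleton.mp hbfib
    rw [this] at hbKC
    exact haKC hbKC
  have hdisj2 : Disjoint (K4.image hh) (SP.image hh) := by
    rw [Finset.disjoint_left]
    intro j hj1 hj2
    obtain ⟨b, hbK4, rfl⟩ := Finset.mem_image.mp hj1
    obtain ⟨a, haSP, hab⟩ := Finset.mem_image.mp hj2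
    obtain ⟨hb1, -, hb0, hb8, hbq⟩ := hK4facts b hbK4
    obtain ⟨haS, had⟩ := mem_filter.mp haSP
    have ha1 : a ≠ 1 := (hmemS _).mp haS
    rcases had with rfl | rfl | haq
    · exact hh_ne_zero h3 hb0 hb8 hb1 (hab.symm.trans hh_zero)
    · exact hh_ne_zero h3 hb0 hb8 hb1 (hab.symm.trans hh_neg8)
    · have hb1728 : hh b = 1728 := hab.symm.trans (hh_1728 h3 haq ha1)
      exact hbq ((hh_eq_1728_iff h3 hb1).mp hb1728)
  -- NC image card
  have hNCim : (NC.image hh).card = NC.card := by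
    apply Finset.card_image_of_injOn
    intro x hx y hy hxy
    obtain ⟨hxS, hxKC⟩ := Finset.mem_sdiff.mp hx
    have hx1 : x ≠ 1 := (hmemS _).mp hxS
    have hxnc : ¬ ∃ c : F, c^3 = x := fun h => hxKC ((hmemKC _).mpr ⟨hx1, h⟩)
    have hy1 : y ≠ 1 := (hmemS _).mp ((Finset.mem_sdiff.mp hy).1)
    have : y ∈ fib x := mem_fib.mpr ⟨hy1, hxy.symm⟩
    rw [fib_nc h3 hx1 hxnc] at this
    exact (Finset.mem_singleton.mp this).symm
  -- K4 image card
  have hK4im : 4 * (K4.image hh).card = K4.card := by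
    have hmap : ∀ b ∈ K4, hh b ∈ K4.image hh := fun b hb => mem_image_of_mem hh hb
    have hsum4 := Finset.card_eq_sum_card_fiberwise hmap
    have hfibs : ∀ j ∈ K4.image hh, (K4.filter (fun a => hh a = j)).card = 4 := by
      intro j hj
      obtain ⟨n, hnK4, rfl⟩ := Finset.mem_image.mp hj
      obtain ⟨hn1, ⟨c, hc⟩, hn0, hn8, hnq⟩ := hK4facts n hnK4
      have hfeq : K4.filter (fun a => hh a = hh n) = fib n := by
        ext m
        simp only [mem_filter, mem_fib]
        constructor
        · rintro ⟨hmK4, hmh⟩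
          exact ⟨(hK4facts m hmK4).1, hmh⟩
        · rintro ⟨hm1, hmh⟩
          have hmfib : m ∈ fib n := mem_fib.mpr ⟨hm1, hmh⟩
          obtain ⟨hm0, hm8, hmq⟩ := fib_stab h3 hn1 hn0 hn8 hnq hmfib
          have hmc : ∃ e : F, e^3 = m := fib_cube h3 hn1 hc hnq hmfib
          refine ⟨Finset.mem_sdiff.mpr ⟨(hmemKC _).mpr ⟨hm1, hmc⟩, ?_⟩, hmh⟩
          intro hmSP
          rcases (mem_filter.mp hmSP).2 with h' | h' | h'
          · exact hm0 h'
          · exact hm8 h'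
          · exact hmq h'
      rw [hfeq]
      exact card_fib4 h3 hω1 hωr hω3 hn1 hc hn0 hn8 hnq
    rw [Finset.sum_congr rfl hfibs, Finset.sum_const, smul_eq_mul] at hsum4
    omega
  -- total image card identity
  have htot : (S.image hh).card = NC.card + ((K4.image hh).card + (SP.image hh).card) := by
    rw [himage, Finset.card_union_of_disjoint hdisj1, Finset.card_union_of_disjoint hdisj2, hNCim]
  -- card NC, K4 relations
  have hNCcard : NC.card + KC.card = S.card := by
    rw [← hSsplit]
    rw [Finset.card_union_of_disjoint (Finset.sdiff_disjoint)]
  have hK4card : K4.card + SP.card = KC.card := by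
    rw [← hKCsplit]
    rw [Finset.card_union_of_disjoint (Finset.sdiff_disjoint)]
  -- now case split for SP
  by_cases h2 : (2:F) = 0
  · -- characteristic 2
    have hSPeq : SP = {0} := by
      ext x
      simp only [hSP, mem_filter, mem_singleton]
      constructor
      · rintro ⟨hxS, rfl | rfl | hx⟩
        · rfl
        · linear_combination -4*h2
        · have hsq : x^2 = 0 := by linear_combination hx + (10*x+4)*h2
          exact (pow_eq_zero_iff (by norm_num : (2:ℕ) ≠ 0)).mp hsq
      · rintro rfl
        exact ⟨(hmemS _).mpr zero_ne_one, Or.inl rfl⟩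
    have hSPcard : SP.card = 1 := by rw [hSPeq]; exact card_singleton 0
    have hSPim : (SP.image hh).card = 1 := by rw [hSPeq, Finset.image_singleton, card_singleton]
    omega
  · by_cases hsq : ∃ s : F, s^2 = 3
    · -- 3 is a square: SP has 4 elements, 2 special fibers
      obtain ⟨s, hs⟩ := hsq
      have hs0 : s ≠ 0 := by
        intro h; rw [h] at hs; exact h3 (by linear_combination -hs)
      have h8ne : (8:F) ≠ 0 := by
        intro h
        have : (2:F)^3 = 0 := by rw [show (2:F)^3 = 8 by norm_num, h]
        exact h2 ((pow_eq_zero_iff (by norm_num : (3:ℕ) ≠ 0)).mp this)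
      have h216 : (216:F) ≠ 0 := by
        intro h
        have h6 : ((2:F)*3)^3 = 0 := by rw [show ((2:F)*3)^3 = 216 by norm_num, h]
        rcases mul_eq_zero.mp ((pow_eq_zero_iff (by norm_num : (3:ℕ) ≠ 0)).mp h6) with h' | h'
        · exact h2 h'
        · exact h3 h'
      have hd2 : (0:F) ≠ 10+6*s := by
        intro h; exact h8ne (by linear_combination (10-6*s)*h - 36*hs)
      have hd3' : (0:F) ≠ 10-6*s := by
        intro h; exact h8ne (by linear_combination (6*s+10)*h - 36*hs)
      have hd4 : (-8:F) ≠ 10+6*s := by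
        intro h; exact h216 (by linear_combination (6*s-18)*h + 36*hs)
      have hd5 : (-8:F) ≠ 10-6*s := by
        intro h; exact h216 (by linear_combination (-6*s-18)*h + 36*hs)
      have hd1 : (0:F) ≠ -8 := fun h => h8ne (by linear_combination h)
      have hd6 : (10+6*s:F) ≠ 10-6*s := by
        intro h
        have h12 : ((2:F)*(2*3))*s = 0 := by linear_combination h
        rcases mul_eq_zero.mp h12 with h' | h'
        · rcases mul_eq_zero.mp h' with h'' | h''
          · exact h2 h''
          · rcases mul_eq_zero.mp h'' with h3' | h3'
            · exact h2 h3'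
            · exact h3 h3'
        · exact hs0 h'
      have hp1 : (10+6*s:F) ≠ 1 := by
        intro h; exact (h27 h3) (by linear_combination (6*s-9)*h - 36*hs)
      have hp2 : (10-6*s:F) ≠ 1 := by
        intro h; exact (h27 h3) (by linear_combination (-6*s-9)*h - 36*hs)
      have hSPeq : SP = {0, -8, 10+6*s, 10-6*s} := by
        ext x
        simp only [hSP, mem_filter, mem_insert, mem_singleton]
        constructor
        · rintro ⟨hxS, rfl | rfl | hx⟩
          · exact Or.inl rfl
          · exact Or.inr (Or.inl rfl)
          · have hfac : (x - (10+6*s))*(x - (10-6*s)) = 0 := by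
              linear_combination hx - 36*hs
            rcases mul_eq_zero.mp hfac with h' | h'
            · exact Or.inr (Or.inr (Or.inl (by linear_combination h')))
            · exact Or.inr (Or.inr (Or.inr (by linear_combination h')))
        · rintro (rfl | rfl | rfl | rfl)
          · exact ⟨(hmemS _).mpr zero_ne_one, Or.inl rfl⟩
          · refine ⟨(hmemS _).mpr ?_, Or.inr (Or.inl rfl)⟩
            intro h
            exact h3 ((pow_eq_zero_iff (by norm_num : (2:ℕ) ≠ 0)).mp
              (by rw [show (3:F)^2 = 9 by norm_num]; linear_combination -h))
          · exact ⟨(hmemS _).mpr hp1, Or.inr (Or.inr (by linear_combination 36*hs))⟩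
          · exact ⟨(hmemS _).mpr hp2, Or.inr (Or.inr (by linear_combination 36*hs))⟩
      have hSPcard : SP.card = 4 := by
        rw [hSPeq]
        rw [card_insert_of_notMem (by
              simp only [mem_insert, mem_singleton]
              push_neg
              exact ⟨hd1, hd2, hd3'⟩),
            card_insert_of_notMem (by
              simp only [mem_insert, mem_singleton]
              push_neg
              exact ⟨hd4, hd5⟩),
            card_insert_of_notMem (by simp only [mem_singleton]; exact hd6),
            card_singleton]
      have h1728ne : (0:F) ≠ 1728 := by
        intro h
        have h0 : (2:F)^6*3^3 = 0 := by
          have e : (2:F)^6*3^3 = 1728 := by norm_num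
          rw [e, ← h]
        rcases mul_eq_zero.mp h0 with h' | h'
        · exact h2 ((pow_eq_zero_iff (by norm_num : (6:ℕ) ≠ 0)).mp h')
        · exact h3 ((pow_eq_zero_iff (by norm_num : (3:ℕ) ≠ 0)).mp h')
      have hSPim : (SP.image hh).card = 2 := by
        have he : SP.image hh = {0, 1728} := by
          rw [hSPeq]
          rw [Finset.image_insert, Finset.image_insert, Finset.image_insert, Finset.image_singleton]
          rw [hh_zero, hh_neg8,
            hh_1728 h3 (by linear_combination 36*hs) hp1,
            hh_1728 h3 (by linear_combination 36*hs) hp2]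
          ext x
          simp only [mem_insert, mem_singleton]
          tauto
        rw [he, card_insert_of_notMem (by simp only [mem_singleton]; exact h1728ne),
          card_singleton]
      omega
    · -- 3 is not a square: SP = {0, -8}
      have h8ne : (8:F) ≠ 0 := by
        intro h
        have : (2:F)^3 = 0 := by rw [show (2:F)^3 = 8 by norm_num, h]
        exact h2 ((pow_eq_zero_iff (by norm_num : (3:ℕ) ≠ 0)).mp this)
      have h36 : (36:F) ≠ 0 := by
        intro h
        have h6 : ((2:F)*3)^2 = 0 := by rw [show ((2:F)*3)^2 = 36 by norm_num, h]
        rcases mul_eq_zero.mp ((pow_eq_zero_iff (by norm_num : (2:ℕ) ≠ 0)).mp h6) with h' | h'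
        · exact h2 h'
        · exact h3 h'
      have hSPeq : SP = {0, -8} := by
        ext x
        simp only [hSP, mem_filter, mem_insert, mem_singleton]
        constructor
        · rintro ⟨hxS, rfl | rfl | hx⟩
          · exact Or.inl rfl
          · exact Or.inr rfl
          · exfalso
            apply hsq
            refine ⟨(x-10)/6, ?_⟩
            rw [div_pow, div_eq_iff (by rw [show ((6:F))^2 = 36 by norm_num]; exact h36)]
            linear_combination hx
        · rintro (rfl | rfl)
          · exact ⟨(hmemS _).mpr zero_ne_one, Or.inl rfl⟩
          · refine ⟨(hmemS _).mpr ?_, Or.inr (Or.inl rfl)⟩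
            intro h
            exact h3 ((pow_eq_zero_iff (by norm_num : (2:ℕ) ≠ 0)).mp
              (by rw [show (3:F)^2 = 9 by norm_num]; linear_combination -h))
      have hSPcard : SP.card = 2 := by
        rw [hSPeq, card_insert_of_notMem (by
          simp only [mem_singleton]; intro h; exact h8ne (by linear_combination h)),
          card_singleton]
      have hSPim : (SP.image hh).card = 1 := by
        have he : SP.image hh = {0} := by
          rw [hSPeq, Finset.image_insert, Finset.image_singleton, hh_zero, hh_neg8]
          simp
        rw [he, card_singleton]
      omega

lemma char3_iff : ((3:F) = 0) ↔ Fintype.card F % 3 = 0 := by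
  set p := ringChar F with hp
  haveI : CharP F p := ringChar.charP F
  obtain ⟨n, hprime, hcard⟩ := FiniteField.card F p
  constructor
  · intro h3
    have hdvd : p ∣ 3 := (CharP.cast_eq_zero_iff F p 3).mp h3
    have hp3 : p = 3 := (Nat.prime_dvd_prime_iff_eq hprime (by norm_num)).mp hdvd
    rw [hcard, hp3]
    have : (3:ℕ) ∣ 3^(n:ℕ) := dvd_pow_self 3 (by positivity)
    omega
  · intro hmod
    have hdvd3 : (3:ℕ) ∣ p^(n:ℕ) := by rw [← hcard]; omega
    have h3p : (3:ℕ) ∣ p := Nat.Prime.dvd_of_dvd_pow (by norm_num) hdvd3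
    have hp3 : p = 3 := ((Nat.prime_dvd_prime_iff_eq (by norm_num) hprime).mp h3p).symm
    rw [show (3:F) = ((3:ℕ):F) by norm_num, ← hp3]
    exact CharP.cast_eq_zero F p

lemma set_eq_char3 (h3 : (3:F) = 0) :
    {j : F | ∃ v : F, v ≠ 0 ∧ ∃ u : F, u ^ 3 ≠ 27 * v ∧
        j = (1 / v) * (u * (u ^ 3 + 216 * v) / (u ^ 3 - 27 * v)) ^ 3}
      = ↑((univ : Finset F).filter (· ≠ 0)) := by
  have h27 : (27:F) = 0 := by linear_combination 9*h3
  have h216 : (216:F) = 0 := by linear_combination 72*h3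
  ext j
  simp only [Set.mem_setOf_eq, Finset.coe_filter, mem_univ, true_and, Set.mem_setOf_eq]
  constructor
  · rintro ⟨v, hv, u, hu, rfl⟩
    rw [h27, zero_mul] at hu
    have hu0 : u ≠ 0 := fun h => hu (by rw [h]; ring)
    rw [h27, h216]
    simp only [zero_mul, add_zero, sub_zero]
    rw [mul_div_assoc, div_self (pow_ne_zero 3 hu0), mul_one]
    exact mul_ne_zero (one_div_ne_zero hv) (pow_ne_zero 3 hu0)
  · intro hj
    refine ⟨j⁻¹, inv_ne_zero hj, 1, ?_, ?_⟩
    · rw [h27, zero_mul, one_pow]; exact one_ne_zero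
    · rw [h27, h216]
      simp only [zero_mul, add_zero, sub_zero, one_pow]
      field_simp
lemma hn1_of (h3 : (3:F) ≠ 0) {u v : F} (hv : v ≠ 0) (hu : u^3 ≠ 27*v) :
    u^3/(27*v) ≠ 1 := by
  intro h
  exact hu ((div_eq_one_iff_eq (mul_ne_zero (h27 h3) hv)).mp h)

open scoped Classical in
lemma set_eq_image (h3 : (3:F) ≠ 0) :
    {j : F | ∃ v : F, v ≠ 0 ∧ ∃ u : F, u ^ 3 ≠ 27 * v ∧
        j = (1 / v) * (u * (u ^ 3 + 216 * v) / (u ^ 3 - 27 * v)) ^ 3}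
      = ↑(((univ : Finset F).filter (fun n : F => n ≠ 1)).image hh) := by
  have h27' := h27 h3
  ext j
  simp only [Set.mem_setOf_eq, Finset.coe_image, Set.mem_image, Finset.mem_coe,
    Finset.mem_filter, Finset.mem_univ, true_and]
  constructor
  · rintro ⟨v, hv, u, hu, rfl⟩
    refine ⟨u^3/(27*v), hn1_of h3 hv hu, ?_⟩
    have h27v : 27*v ≠ 0 := mul_ne_zero h27' hv
    have hsub : u^3 - 27*v ≠ 0 := sub_ne_zero.2 hu
    have hden : u^3/(27*v) - 1 ≠ 0 := by
      have e : u^3/(27*v) - 1 = (u^3 - 27*v)/(27*v) := by field_simp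
      rw [e]
      exact div_ne_zero hsub h27v
    rw [hh, div_eq_iff (pow_ne_zero 3 hden)]
    field_simp
    ring
  · rintro ⟨n, hn1, rfl⟩
    rcases eq_or_ne n 0 with rfl | hn0
    · refine ⟨1, one_ne_zero, 0, ?_, ?_⟩
      · intro h
        exact h27' (by linear_combination -h)
      · rw [hh_zero]
        norm_num
    · refine ⟨n⁻¹, inv_ne_zero hn0, 3, ?_, ?_⟩
      · intro h
        have h1 : (27:F)*(1 - n⁻¹) = 0 := by
          rw [show (3:F)^3 = 27 by norm_num] at h
          linear_combination h
        rcases mul_eq_zero.mp h1 with h' | h'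
        · exact h27' h'
        · apply hn1
          have : n⁻¹ = 1 := by linear_combination -h'
          rw [← inv_inv n, this, inv_one]
      · have hnm1 : n - 1 ≠ 0 := sub_ne_zero.2 hn1
        have hinv1 : n⁻¹ ≠ 1 := fun h => hn1 (by rw [← inv_inv n, h, inv_one])
        have hd1 : (3:F)^3 - 27*n⁻¹ ≠ 0 := by
          rw [show (3:F)^3 = 27 by norm_num]
          intro h
          have h1 : (27:F)*(1 - n⁻¹) = 0 := by linear_combination h
          rcases mul_eq_zero.mp h1 with h' | h'
          · exact h27' h'
          · exact hinv1 (by linear_combination -h')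
        have e1 : (3:F)*(3^3+216*n⁻¹)/(3^3-27*n⁻¹) = 3*(n+8)/(n-1) := by
          rw [div_eq_div_iff hd1 hnm1]
          field_simp
          ring
        rw [hh, e1, one_div, inv_inv, div_pow, ← mul_div_assoc,
          div_eq_div_iff (pow_ne_zero 3 hnm1) (pow_ne_zero 3 hnm1)]
        ring

end Counting
end WithFintype
end GHJ

open Finset in
/-- The number of distinct `j`-invariants `(1/v)(u(u³+216v)/(u³-27v))³` of generalized Hessian
curves `X³+Y³+v = uXY` over `F_q`, as `v` ranges over `F_q^*` and `u` over `{u : u³ ≠ 27v}`. -/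
theorem generalized_hessian_j_count
    (F : Type*) [Field F] [Fintype F] :
    (Fintype.card F % 3 = 0 →
      {j : F | ∃ v : F, v ≠ 0 ∧ ∃ u : F, u ^ 3 ≠ 27 * v ∧
          j = (1 / v) * (u * (u ^ 3 + 216 * v) / (u ^ 3 - 27 * v)) ^ 3}.ncard =
        Fintype.card F - 1) ∧
    (Fintype.card F % 3 = 1 →
      {j : F | ∃ v : F, v ≠ 0 ∧ ∃ u : F, u ^ 3 ≠ 27 * v ∧
          j = (1 / v) * (u * (u ^ 3 + 216 * v) / (u ^ 3 - 27 * v)) ^ 3}.ncard =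
        (3 * Fintype.card F + 1) / 4) ∧
    (Fintype.card F % 3 = 2 →
      {j : F | ∃ v : F, v ≠ 0 ∧ ∃ u : F, u ^ 3 ≠ 27 * v ∧
          j = (1 / v) * (u * (u ^ 3 + 216 * v) / (u ^ 3 - 27 * v)) ^ 3}.ncard =
        Fintype.card F / 2) := by
  classical
  refine ⟨?_, ?_, ?_⟩
  · intro hq
    rw [GHJ.set_eq_char3 (GHJ.char3_iff.mpr hq), Set.ncard_coe_finset,
      Finset.filter_ne' univ 0, Finset.card_erase_of_mem (mem_univ 0), Finset.card_univ]
  · intro hq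
    have h3 : (3:F) ≠ 0 := fun h => by rw [GHJ.char3_iff.mp h] at hq; exact absurd hq (by norm_num)
    rw [GHJ.set_eq_image h3, Set.ncard_coe_finset]
    exact GHJ.count1 h3 hq
  · intro hq
    have h3 : (3:F) ≠ 0 := fun h => by rw [GHJ.char3_iff.mp h] at hq; exact absurd hq (by norm_num)
    rw [GHJ.set_eq_image h3, Set.ncard_coe_finset]
    exact GHJ.count2 h3 hq
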